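/- For any even m ≥ 2 and any γ ∈ (0,1), there exists a set V = {v^1, …, v^N} of N = binomial(m, m/2) single-bidder, m-item valuation functions such that for every subset H ⊆ V there exists a monotone function of bundle reserve prices r : 2^[m] → ℝ_{≥0} (i.e., r(b) ≤ r(b') whenever b ⊆ b') for which the resulting single-bidder auction with bundle reserve prices has revenue 1 − γ on every v^ℓ ∈ H and revenue 0 on every v^ℓ ∉ H. -/
import Mathlib


open Finset MeasureTheory

/-- An `n`-bidder, `m`-item allocation: pairwise disjoint bundles of items. -/
def Alloc (n m : ℕ) : Type :=
  {o : Fin n → Finset (Fin m) // ∀ i j, i ≠ j → o i ∩ o j = ∅}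

instance (n m : ℕ) : Inhabited (Alloc n m) :=
  ⟨⟨fun _ => ∅, fun _ _ _ => by simp⟩⟩

instance (n m : ℕ) : Fintype (Alloc n m) :=
  Subtype.fintype _

instance (n m : ℕ) : Nonempty (Alloc n m) := ⟨default⟩

/-- Maximum of a real-valued function over all allocations. -/
noncomputable def allocMax {n m : ℕ} (f : Alloc n m → ℝ) : ℝ :=
  Finset.univ.sup' Finset.univ_nonempty f

/-- A fixed (canonical) maximizer of a real-valued function over all allocations. -/
noncomputable def chooseMax {n m : ℕ} (f : Alloc n m → ℝ) : Alloc n m :=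
  Classical.choose (Finset.exists_max_image Finset.univ f Finset.univ_nonempty)

/-- `os` maximizes the boosted weighted social welfare. -/
def IsMaxAlloc {n m : ℕ} (w : Fin n → ℝ) (lam : Alloc n m → ℝ)
    (v : Fin n → Finset (Fin m) → ℝ) (os : Alloc n m) : Prop :=
  ∀ o : Alloc n m, (∑ j, w j * v j (o.1 j)) + lam o ≤ (∑ j, w j * v j (os.1 j)) + lam os

/-- Revenue of the AMA with weights `w`, boosts `lam`, on valuations `v`, when the
chosen (welfare-maximizing) allocation is `os`. -/
noncomputable def amaRev {n m : ℕ} (w : Fin n → ℝ) (lam : Alloc n m → ℝ)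
    (v : Fin n → Finset (Fin m) → ℝ) (os : Alloc n m) : ℝ :=
  ∑ j, (w j)⁻¹ *
    (allocMax (fun o => (∑ l ∈ Finset.univ.erase j, w l * v l (o.1 l)) + lam o)
      - ((∑ l ∈ Finset.univ.erase j, w l * v l (os.1 l)) + lam os))

/-- The boosts of the `c`-MBA. -/
def mbaLam {n m : ℕ} (c : ℝ) : Alloc n m → ℝ :=
  fun o => if ∃ i, o.1 i = Finset.univ then c else 0

/-- Revenue of the `c`-MBA (with a fixed tie-breaking rule). -/
noncomputable def mbaRev {n m : ℕ} (v : Fin n → Finset (Fin m) → ℝ) (c : ℝ) : ℝ :=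
  amaRev (fun _ => 1) (mbaLam c) v
    (chooseMax fun o => (∑ j, v j (o.1 j)) + mbaLam c o)

/-- Revenue of the MBARP with grand-bundle boost `c` and item reserve prices `r`
(with a fixed tie-breaking rule); the seller participates as bidder `0`. -/
noncomputable def mbarpRev {n m : ℕ} (v : Fin n → Finset (Fin m) → ℝ) (c : ℝ)
    (r : Fin m → ℝ) : ℝ :=
  let vx : Fin (n + 1) → Finset (Fin m) → ℝ :=
    fun i b => Fin.cases (∑ j ∈ b, r j) (fun i' => v i' b) i
  let g : Fin (n + 1) → Alloc (n + 1) m → ℝ :=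
    fun i o => (∑ l ∈ Finset.univ.erase i, vx l (o.1 l)) + mbaLam c o
  let os : Alloc (n + 1) m := chooseMax fun o => (∑ i, vx i (o.1 i)) + mbaLam c o
  ∑ i : Fin n, (allocMax (g i.succ) - g i.succ os)

/-- Empirical Rademacher complexity of a class `F` on the sample `S`. -/
noncomputable def empRad {X : Type*} (F : Set (X → ℝ)) {N : ℕ} (S : Fin N → X) : ℝ :=
  ((2 : ℝ) ^ N)⁻¹ * ∑ σ : Fin N → Bool,
    ⨆ f ∈ F, (N : ℝ)⁻¹ * ∑ i, (if σ i then (1 : ℝ) else -1) * f (S i)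

/-- Rademacher complexity: expected empirical Rademacher complexity over i.i.d. samples. -/
noncomputable def radComp {X : Type*} [MeasurableSpace X] (D : Measure X)
    (F : Set (X → ℝ)) (N : ℕ) : ℝ :=
  ∫ S, empRad F S ∂(Measure.pi fun _ : Fin N => D)

/-- Pseudo-shattering of the tuple `x` by the class `F`, with witnesses `z`. -/
def PShatters {X : Type*} (F : Set (X → ℝ)) {k : ℕ} (x : Fin k → X) : Prop :=
  ∃ z : Fin k → ℝ, ∀ T : Finset (Fin k), ∃ f ∈ F,
    (∀ i, i ∈ T → f (x i) ≤ z i) ∧ (∀ i, i ∉ T → z i < f (x i))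

/-- A valuation is additive if it is determined by its values on singletons. -/
def AdditiveVal {n m : ℕ} (v : Fin n → Finset (Fin m) → ℝ) : Prop :=
  ∀ i b, v i b = ∑ j ∈ b, v i {j}

/-- For any even `m ≥ 2` and `γ ∈ (0,1)`, there is a set of
`C(m, m/2)` single-bidder, `m`-item valuation functions such that for every
subset `H` there are monotone nonnegative bundle reserve prices `r` for which the
single-bidder auction with bundle reserve prices has revenue `1 − γ` on every
member of `H` and revenue `0` on every non-member. The bidder's allocated bundle
`o₁` maximizes `r(o₁ᶜ) + v(o₁)`, and the revenue is `max_b r(b) − r(o₁ᶜ)`. -/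
theorem stmt19 (m : ℕ) (hm : 2 ≤ m) (hme : Even m)
    (γ : ℝ) (hγ : γ ∈ Set.Ioo (0 : ℝ) 1) :
    ∃ vs : Fin (Nat.choose m (m / 2)) → (Finset (Fin m) → ℝ),
      Function.Injective vs ∧
      (∀ ℓ, vs ℓ ∅ = 0) ∧
      ∀ H : Set (Fin (Nat.choose m (m / 2))),
        ∃ r : Finset (Fin m) → ℝ,
          (∀ b, 0 ≤ r b) ∧
          (∀ b b' : Finset (Fin m), b ⊆ b' → r b ≤ r b') ∧
          ∀ ℓ, ∀ o1 : Finset (Fin m),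
            (∀ o' : Finset (Fin m), r o'ᶜ + vs ℓ o' ≤ r o1ᶜ + vs ℓ o1) →
              ((ℓ ∈ H → Finset.univ.sup' Finset.univ_nonempty r - r o1ᶜ = 1 - γ) ∧
               (ℓ ∉ H → Finset.univ.sup' Finset.univ_nonempty r - r o1ᶜ = 0)) := by
    classical
  obtain ⟨hγ0, hγ1⟩ := hγ
  have hk2 : m / 2 + m / 2 = m := by obtain ⟨t, ht⟩ := hme; omega
  have hk1 : 1 ≤ m / 2 := by omega
  have hklt : m / 2 < m := by omega
  have hcard : Fintype.card {b : Finset (Fin m) // b.card = m / 2}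
      = Nat.choose m (m / 2) := by
    rw [Fintype.card_subtype]
    have hfil : Finset.univ.filter (fun b : Finset (Fin m) => b.card = m / 2)
        = Finset.powersetCard (m / 2) Finset.univ := by
      ext b; simp [Finset.mem_powersetCard_univ]
    rw [hfil, Finset.card_powersetCard, Finset.card_univ, Fintype.card_fin]
  let e : Fin (Nat.choose m (m / 2)) ≃ {b : Finset (Fin m) // b.card = m / 2} :=
    (Fintype.equivFinOfCardEq hcard).symm
  set S : Fin (Nat.choose m (m / 2)) → Finset (Fin m) := fun ℓ => (e ℓ).1 with hS
  have hScard : ∀ ℓ, (S ℓ).card = m / 2 := fun ℓ => (e ℓ).2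
  have hSinj : Function.Injective S := fun a b h => e.injective (Subtype.ext h)
  have hSccard : ∀ ℓ, (S ℓ)ᶜ.card = m / 2 := by
    intro ℓ
    rw [Finset.card_compl, hScard, Fintype.card_fin]; omega
  refine ⟨fun ℓ b => if S ℓ ⊆ b then 1 else 0, ?_, ?_, ?_⟩
  · intro a b hab
    by_contra hne
    have hSne : S a ≠ S b := fun h => hne (hSinj h)
    have h1 := congrFun hab (S a)
    simp only [Finset.Subset.refl, if_pos] at h1
    have hnsub : ¬ S b ⊆ S a := by
      intro hsub
      exact hSne (Finset.eq_of_subset_of_card_le hsub (by rw [hScard, hScard])).symm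
    rw [if_neg hnsub] at h1
    norm_num at h1
  · intro ℓ
    have : ¬ S ℓ ⊆ ∅ := by
      intro h
      have := hScard ℓ
      rw [Finset.subset_empty.mp h] at this
      simp at this; omega
    simp [this]
  · intro H
    set r : Finset (Fin m) → ℝ := fun b =>
      if b.card < m / 2 then 0
      else if b.card = m / 2 ∧ ∃ ℓ ∈ H, S ℓ = bᶜ then γ else 1 with hr
    have hr0 : ∀ b, (0:ℝ) ≤ r b := by
      intro b; rw [hr]; dsimp only
      split_ifs <;> [rfl; exact le_of_lt hγ0; norm_num]
    have hr1 : ∀ b, r b ≤ 1 := by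
      intro b; rw [hr]; dsimp only
      split_ifs <;> [norm_num; exact le_of_lt hγ1; rfl]
    have hmono : ∀ b b' : Finset (Fin m), b ⊆ b' → r b ≤ r b' := by
      intro b b' hbb
      have hcle : b.card ≤ b'.card := Finset.card_le_card hbb
      by_cases h1 : b.card < m / 2
      · rw [show r b = 0 by rw [hr]; simp [h1]]
        exact hr0 b'
      · have h1' : ¬ b'.card < m / 2 := by omega
        by_cases h2 : b.card = m / 2 ∧ ∃ ℓ ∈ H, S ℓ = bᶜ
        · have : r b = γ := by rw [hr]; simp only [if_neg h1, if_pos h2]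
          rw [this]
          calc γ ≤ min γ 1 := le_min le_rfl (le_of_lt hγ1)
          _ ≤ r b' := by
              rw [hr]; dsimp only; rw [if_neg h1']
              split_ifs <;> [exact min_le_left _ _; exact min_le_right _ _]
        · have hb1 : r b = 1 := by rw [hr]; simp only [if_neg h1, if_neg h2]
          have h2' : ¬ (b'.card = m / 2 ∧ ∃ ℓ ∈ H, S ℓ = b'ᶜ) := by
            rintro ⟨hc', hw'⟩
            have hbeq : b = b' := Finset.eq_of_subset_of_card_le hbb (by omega)
            exact h2 ⟨by rw [hbeq, hc'], by rw [hbeq]; exact hw'⟩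
          rw [hb1, hr]; simp only [if_neg h1', if_neg h2']; exact le_rfl
    have hruniv : r Finset.univ = 1 := by
      rw [hr]; dsimp only
      rw [Finset.card_univ, Fintype.card_fin]
      rw [if_neg (by omega), if_neg (by rintro ⟨h, -⟩; omega)]
    have hsup : Finset.univ.sup' Finset.univ_nonempty r = 1 := by
      apply le_antisymm
      · exact Finset.sup'_le _ _ fun b _ => hr1 b
      · rw [← hruniv]; exact Finset.le_sup' r (Finset.mem_univ _)
    refine ⟨r, hr0, hmono, ?_⟩
    intro ℓ o1 hmax
    have hvle : ∀ b, (if S ℓ ⊆ b then (1:ℝ) else 0) ≤ 1 := by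
      intro b; split_ifs <;> norm_num
    by_cases hℓ : ℓ ∈ H
    · -- r (S ℓ)ᶜ = γ
      have hrS : r (S ℓ)ᶜ = γ := by
        rw [hr]; dsimp only
        rw [if_neg (by rw [hSccard]; omega),
          if_pos ⟨hSccard ℓ, ℓ, hℓ, (compl_compl (S ℓ)).symm⟩]
      have hfS := hmax (S ℓ)
      dsimp only at hfS
      rw [hrS, if_pos (Finset.Subset.refl _)] at hfS
      have hsub : S ℓ ⊆ o1 := by
        by_contra hns
        rw [if_neg hns] at hfS
        have := hr1 o1ᶜ
        linarith
      rw [if_pos hsub] at hfS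
      have hγle : γ ≤ r o1ᶜ := by linarith
      have hcsub : o1ᶜ ⊆ (S ℓ)ᶜ := Finset.compl_subset_compl.mpr hsub
      have hccard : o1ᶜ.card ≤ m / 2 := by
        rw [← hSccard ℓ]; exact Finset.card_le_card hcsub
      have hclt : ¬ o1ᶜ.card < m / 2 := by
        intro hlt
        have : r o1ᶜ = 0 := by rw [hr]; simp [hlt]
        rw [this] at hγle; linarith
      have hceq : o1ᶜ = (S ℓ)ᶜ :=
        Finset.eq_of_subset_of_card_le hcsub (by rw [hSccard]; omega)
      refine ⟨fun _ => ?_, fun h => absurd hℓ h⟩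
      rw [hsup, hceq, hrS]
    · -- r (S ℓ)ᶜ = 1
      have hrS : r (S ℓ)ᶜ = 1 := by
        rw [hr]; dsimp only
        rw [if_neg (by rw [hSccard]; omega), if_neg]
        rintro ⟨-, ℓ', hℓ', hSeq⟩
        rw [compl_compl] at hSeq
        exact hℓ (hSinj hSeq ▸ hℓ')
      have hfS := hmax (S ℓ)
      dsimp only at hfS
      rw [hrS, if_pos (Finset.Subset.refl _)] at hfS
      have h1le : (1:ℝ) ≤ r o1ᶜ := by
        have := hvle o1
        linarith
      have hreq : r o1ᶜ = 1 := le_antisymm (hr1 _) h1le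
      refine ⟨fun h => absurd h hℓ, fun _ => ?_⟩
      rw [hsup, hreq]; ring
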